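/- Define the value iteration map for the minimax problem: given a function J : ℝ₊ⁿ → ℝ, let (TJ)(x) = min_{|u|≤Ex} max_{|w|≤Gx} [ sᵀx + rᵀu − γᵀw + J(Ax + Bu + Fw) ]. If p ∈ ℝⁿ and J(x) = pᵀx for all x ≥ 0, and the invariance condition A ≥ |B|E + |F|G holds with E, G entrywise nonnegative, then (TJ)(x) = qᵀx where q = s + Aᵀp − Eᵀ|r + Bᵀp| + Gᵀ|−γ + Fᵀp|. In particular, linearity of the value function is preserved under value iteration. -/

import Mathlib

open Matrix

/-- the optimizer achieving `max { c ⬝ᵥ w | |w| ≤ y }` -/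
noncomputable def optVec {k : ℕ} (c y : Fin k → ℝ) : Fin k → ℝ :=
  fun i => if 0 ≤ c i then y i else -y i

lemma abs_optVec {k : ℕ} (c y : Fin k → ℝ) (hy : ∀ i, 0 ≤ y i) (i : Fin k) :
    |optVec c y i| = y i := by
  unfold optVec
  by_cases h : 0 ≤ c i <;> simp [h, abs_of_nonneg (hy i)]

lemma dot_optVec {k : ℕ} (c y : Fin k → ℝ) :
    c ⬝ᵥ optVec c y = ∑ i, |c i| * y i := by
  simp only [dotProduct, optVec]
  refine Finset.sum_congr rfl fun i _ => ?_
  by_cases h : 0 ≤ c i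
  · simp [h, abs_of_nonneg h]
  · rw [if_neg h, abs_of_neg (not_le.mp h)]
    ring

lemma dot_le_absSum {k : ℕ} (c y w : Fin k → ℝ) (hw : ∀ i, |w i| ≤ y i) :
    c ⬝ᵥ w ≤ ∑ i, |c i| * y i := by
  simp only [dotProduct]
  refine Finset.sum_le_sum fun i _ => ?_
  calc c i * w i ≤ |c i * w i| := le_abs_self _
    _ = |c i| * |w i| := abs_mul _ _
    _ ≤ |c i| * y i := mul_le_mul_of_nonneg_left (hw i) (abs_nonneg _)

lemma mulVec_lb {k k2 : ℕ} (M : Matrix (Fin k) (Fin k2) ℝ) (u b : Fin k2 → ℝ)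
    (hu : ∀ i, |u i| ≤ b i) (i : Fin k) :
    -(((Matrix.of fun i j => |M i j|) *ᵥ b) i) ≤ (M *ᵥ u) i := by
  simp only [mulVec, dotProduct, of_apply]
  rw [← Finset.sum_neg_distrib]
  refine Finset.sum_le_sum fun j _ => ?_
  have h1 : |M i j * u j| ≤ |M i j| * b j := by
    rw [abs_mul]; exact mul_le_mul_of_nonneg_left (hu j) (abs_nonneg _)
  linarith [neg_abs_le (M i j * u j)]

theorem stmt4 {n m l : ℕ}
    (A : Matrix (Fin n) (Fin n) ℝ) (B : Matrix (Fin n) (Fin m) ℝ)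
    (F : Matrix (Fin n) (Fin l) ℝ)
    (E : Matrix (Fin m) (Fin n) ℝ) (G : Matrix (Fin l) (Fin n) ℝ)
    (s : Fin n → ℝ) (r : Fin m → ℝ) (γ : Fin l → ℝ)
    (hE : ∀ i j, 0 ≤ E i j) (hG : ∀ i j, 0 ≤ G i j)
    (hA : ∀ i j, ((Matrix.of fun i j => |B i j|) * E) i j
        + ((Matrix.of fun i j => |F i j|) * G) i j ≤ A i j)
    (p : Fin n → ℝ) (J : (Fin n → ℝ) → ℝ)
    (hJ : ∀ x, (∀ i, 0 ≤ x i) → J x = p ⬝ᵥ x)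
    (q : Fin n → ℝ)
    (hq : q = s + Aᵀ *ᵥ p - Eᵀ *ᵥ (fun i => |r i + (Bᵀ *ᵥ p) i|)
        + Gᵀ *ᵥ (fun i => |-γ i + (Fᵀ *ᵥ p) i|)) :
    ∀ x : Fin n → ℝ, (∀ i, 0 ≤ x i) →
      IsLeast {v : ℝ | ∃ u : Fin m → ℝ, (∀ i, |u i| ≤ (E *ᵥ x) i) ∧
          IsGreatest {z : ℝ | ∃ w : Fin l → ℝ, (∀ i, |w i| ≤ (G *ᵥ x) i) ∧
              z = s ⬝ᵥ x + r ⬝ᵥ u - γ ⬝ᵥ w + J (A *ᵥ x + B *ᵥ u + F *ᵥ w)} v}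
        (q ⬝ᵥ x) := by
  intro x hx
  set yE := E *ᵥ x with hyE
  set yG := G *ᵥ x with hyG
  have hyE0 : ∀ i, 0 ≤ yE i := by
    intro i
    simp only [hyE, mulVec, dotProduct]
    exact Finset.sum_nonneg fun j _ => mul_nonneg (hE i j) (hx j)
  have hyG0 : ∀ i, 0 ≤ yG i := by
    intro i
    simp only [hyG, mulVec, dotProduct]
    exact Finset.sum_nonneg fun j _ => mul_nonneg (hG i j) (hx j)
  set d : Fin m → ℝ := fun i => r i + (Bᵀ *ᵥ p) i with hd
  set c : Fin l → ℝ := fun i => -γ i + (Fᵀ *ᵥ p) i with hc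
  -- nonnegativity of next state
  have hstate : ∀ u w, (∀ i, |u i| ≤ yE i) → (∀ i, |w i| ≤ yG i) →
      ∀ i, 0 ≤ (A *ᵥ x + B *ᵥ u + F *ᵥ w) i := by
    intro u w hu hw i
    have h1 := mulVec_lb B u yE hu i
    have h2 := mulVec_lb F w yG hw i
    have h3 : ((Matrix.of fun i j => |B i j|) *ᵥ yE) i
        + ((Matrix.of fun i j => |F i j|) *ᵥ yG) i ≤ (A *ᵥ x) i := by
      rw [hyE, hyG, Matrix.mulVec_mulVec, Matrix.mulVec_mulVec]
      simp only [mulVec, dotProduct]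
      rw [← Finset.sum_add_distrib]
      refine Finset.sum_le_sum fun j _ => ?_
      have h := hA i j
      have hxj := hx j
      nlinarith
    simp only [Pi.add_apply]
    linarith
  -- dot product manipulation helpers
  have hpB : ∀ u : Fin m → ℝ, p ⬝ᵥ (B *ᵥ u) = (Bᵀ *ᵥ p) ⬝ᵥ u := by
    intro u; rw [Matrix.mulVec_transpose, ← Matrix.dotProduct_mulVec]
  have hpF : ∀ w : Fin l → ℝ, p ⬝ᵥ (F *ᵥ w) = (Fᵀ *ᵥ p) ⬝ᵥ w := by
    intro w; rw [Matrix.mulVec_transpose, ← Matrix.dotProduct_mulVec]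
  have hpA : (Aᵀ *ᵥ p) ⬝ᵥ x = p ⬝ᵥ (A *ᵥ x) := by
    rw [Matrix.mulVec_transpose, ← Matrix.dotProduct_mulVec]
  have hdu : ∀ u : Fin m → ℝ, d ⬝ᵥ u = r ⬝ᵥ u + (Bᵀ *ᵥ p) ⬝ᵥ u := by
    intro u
    simp only [hd, dotProduct, add_mul, Finset.sum_add_distrib]
  have hcw : ∀ w : Fin l → ℝ, c ⬝ᵥ w = -(γ ⬝ᵥ w) + (Fᵀ *ᵥ p) ⬝ᵥ w := by
    intro w
    simp only [hc, dotProduct, add_mul, Finset.sum_add_distrib, neg_mul,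
      Finset.sum_neg_distrib]
  -- the objective is affine in (u, w)
  have hobj : ∀ u w, (∀ i, |u i| ≤ yE i) → (∀ i, |w i| ≤ yG i) →
      s ⬝ᵥ x + r ⬝ᵥ u - γ ⬝ᵥ w + J (A *ᵥ x + B *ᵥ u + F *ᵥ w)
        = s ⬝ᵥ x + p ⬝ᵥ (A *ᵥ x) + d ⬝ᵥ u + c ⬝ᵥ w := by
    intro u w hu hw
    rw [hJ _ (hstate u w hu hw), dotProduct_add, dotProduct_add, hpB, hpF,
      hdu, hcw]
    ring
  -- value of q ⬝ᵥ x
  have habsdot : ∀ {k : ℕ} (M : Matrix (Fin k) (Fin n) ℝ) (f : Fin k → ℝ),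
      (Mᵀ *ᵥ f) ⬝ᵥ x = ∑ i, f i * (M *ᵥ x) i := by
    intro k M f
    rw [Matrix.mulVec_transpose, ← Matrix.dotProduct_mulVec, dotProduct]
  have hqx : q ⬝ᵥ x = s ⬝ᵥ x + p ⬝ᵥ (A *ᵥ x)
      - (∑ i, |d i| * yE i) + (∑ i, |c i| * yG i) := by
    rw [hq]
    simp only [add_dotProduct, sub_dotProduct, hpA, habsdot]
    rfl
  constructor
  · -- membership: the optimal u achieves q ⬝ᵥ x
    refine ⟨-(optVec d yE), ?_, ?_, ?_⟩
    · intro i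
      simp only [Pi.neg_apply, abs_neg]
      exact (abs_optVec d yE hyE0 i).le
    · refine ⟨optVec c yG, fun i => (abs_optVec c yG hyG0 i).le, ?_⟩
      rw [hobj _ _ (fun i => by
          simp only [Pi.neg_apply, abs_neg]
          exact (abs_optVec d yE hyE0 i).le)
        (fun i => (abs_optVec c yG hyG0 i).le)]
      rw [dotProduct_neg, dot_optVec, dot_optVec, hqx]
      ring
    · rintro z ⟨w, hw, rfl⟩
      rw [hobj _ _ (fun i => by
          simp only [Pi.neg_apply, abs_neg]
          exact (abs_optVec d yE hyE0 i).le) hw]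
      have h1 := dot_le_absSum c yG w hw
      rw [dotProduct_neg, dot_optVec, hqx]
      linarith
  · -- lower bound
    rintro v ⟨u, hu, hvmem, hvub⟩
    have hz : (s ⬝ᵥ x + p ⬝ᵥ (A *ᵥ x) + d ⬝ᵥ u + ∑ i, |c i| * yG i) ∈
        {z : ℝ | ∃ w : Fin l → ℝ, (∀ i, |w i| ≤ yG i) ∧
          z = s ⬝ᵥ x + r ⬝ᵥ u - γ ⬝ᵥ w + J (A *ᵥ x + B *ᵥ u + F *ᵥ w)} := by
      refine ⟨optVec c yG, fun i => (abs_optVec c yG hyG0 i).le, ?_⟩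
      rw [hobj _ _ hu (fun i => (abs_optVec c yG hyG0 i).le), dot_optVec]
    have h1 := hvub hz
    have h2 : -(d ⬝ᵥ u) ≤ ∑ i, |d i| * yE i := by
      have := dot_le_absSum (-d) yE u hu
      simp only [neg_dotProduct] at this
      calc -(d ⬝ᵥ u) ≤ ∑ i, |(-d) i| * yE i := this
        _ = ∑ i, |d i| * yE i := by
            refine Finset.sum_congr rfl fun i _ => ?_
            rw [Pi.neg_apply, abs_neg]
    rw [hqx]
    linarith
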